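/- Let p be a prime and 2 ≤ a ≤ p − 1. The inner automorphism group of the linear Alexander quandle X = Λ_p/(t − a) equals {(s_x)^k | x ∈ ℤ/pℤ, k ∈ ℤ} ∪ {φ_m | m ∈ ℤ/pℤ}, where φ_m(x) = x + m. -/

import Mathlib

/-- A quandle given by a family of permutations `s x` satisfying
`s x x = x` and `s x ∘ s y = s (s x y) ∘ s x`. -/
structure SQuandle (X : Type*) where
  s : X → Equiv.Perm X
  fix : ∀ x, s x x = x
  dist : ∀ x y, s x * s y = s (s x y) * s x

/-- The inner automorphism group: the subgroup of permutations generated by the `s x`. -/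
def Inn {X : Type*} (s : X → Equiv.Perm X) : Subgroup (Equiv.Perm X) :=
  Subgroup.closure (Set.range s)

/-- Two-point homogeneity with respect to the inner automorphism group. -/
def TwoPointHomogeneous {X : Type*} (s : X → Equiv.Perm X) : Prop :=
  ∀ x₁ x₂ y₁ y₂ : X, x₁ ≠ x₂ → y₁ ≠ y₂ →
    ∃ f ∈ Inn s, f x₁ = y₁ ∧ f x₂ = y₂

/-- Connectedness: the inner automorphism group acts transitively. -/
def QConnected {X : Type*} (s : X → Equiv.Perm X) : Prop :=
  ∀ x y : X, ∃ f ∈ Inn s, f x = y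

/-- Cyclic type: each `s x` acts on `X \ {x}` as a single cycle of order `#X - 1`,
i.e. `s x` is a cycle whose support is the complement of `{x}`. -/
def CyclicType {X : Type*} [Fintype X] [DecidableEq X] (s : X → Equiv.Perm X) : Prop :=
  ∀ x : X, (s x).IsCycle ∧ (s x).support = {x}ᶜ

/-- The symmetry `y ↦ a*y + (1-a)*x` of the linear Alexander quandle
`Λ_p/(t-a)` on `ZMod p` (`p` prime, `a ≠ 0`). -/
def alexS (p : ℕ) [Fact p.Prime] (a : ZMod p) (ha : a ≠ 0) (x : ZMod p) :
    Equiv.Perm (ZMod p) where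
  toFun y := a * y + (1 - a) * x
  invFun y := a⁻¹ * (y - (1 - a) * x)
  left_inv y := by field_simp <;> ring
  right_inv y := by field_simp <;> ring

lemma alexS_apply' (p : ℕ) [Fact p.Prime] (a : ZMod p) (ha : a ≠ 0) (x y : ZMod p) :
    alexS p a ha x y = a * y + (1 - a) * x := rfl

/-- The subgroup of affine permutations with multiplier a power of `a`. -/
def affSub (p : ℕ) [Fact p.Prime] (a : ZMod p) (ha : a ≠ 0) :
    Subgroup (Equiv.Perm (ZMod p)) where
  carrier := {f | ∃ (k : ℤ) (c : ZMod p), ∀ z, f z = a ^ k * z + c}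
  one_mem' := ⟨0, 0, fun z => by simp⟩
  mul_mem' := by
    rintro f g ⟨k, c, hf⟩ ⟨j, d, hg⟩
    exact ⟨k + j, a ^ k * d + c, fun z => by
      rw [Equiv.Perm.mul_apply, hg, hf, zpow_add₀ ha]; ring⟩
  inv_mem' := by
    rintro f ⟨k, c, hf⟩
    refine ⟨-k, -(a ^ (-(k : ℤ)) * c), fun z => ?_⟩
    have h : f (a ^ (-(k : ℤ)) * z + -(a ^ (-(k : ℤ)) * c)) = z := by
      rw [hf, zpow_neg]
      field_simp [zpow_ne_zero k ha]
      ring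
    calc f⁻¹ z = f⁻¹ (f (a ^ (-(k : ℤ)) * z + -(a ^ (-(k : ℤ)) * c))) := by rw [h]
      _ = _ := f.symm_apply_apply _

lemma alexS_inv_apply (p : ℕ) [Fact p.Prime] (a : ZMod p) (ha : a ≠ 0) (x y : ZMod p) :
    (alexS p a ha x)⁻¹ y = a⁻¹ * y + (1 - a⁻¹) * x := by
  show a⁻¹ * (y - (1 - a) * x) = _
  field_simp
  ring

lemma alexS_zpow (p : ℕ) [Fact p.Prime] (a : ZMod p) (ha : a ≠ 0) (x : ZMod p) (k : ℤ)
    (y : ZMod p) : ((alexS p a ha x) ^ k) y = a ^ k * y + (1 - a ^ k) * x := by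
  induction k using Int.induction_on generalizing y with
  | zero => simp
  | succ n ih =>
      rw [zpow_add_one, Equiv.Perm.mul_apply, alexS_apply', ih, zpow_add_one₀ ha]
      ring
  | pred n ih =>
      rw [zpow_sub_one, Equiv.Perm.mul_apply, alexS_inv_apply, ih, zpow_sub_one₀ ha]
      field_simp
      ring

/-- `Inn(Λ_p/(t-a)) = {(s x)^k} ∪ {translations}`. -/
theorem alex_inn_eq (p : ℕ) [Fact p.Prime] (a : ZMod p)
    (ha : a ≠ 0) (ha1 : a ≠ 1) :
    (Inn (alexS p a ha) : Set (Equiv.Perm (ZMod p))) =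
      {f | ∃ (x : ZMod p) (k : ℤ), f = (alexS p a ha x) ^ k} ∪
      {f | ∃ m : ZMod p, f = Equiv.addLeft m} := by
  classical
  have hp1a : (1 : ZMod p) - a ≠ 0 := sub_ne_zero.mpr (Ne.symm ha1)
  ext f
  simp only [Set.mem_union, Set.mem_setOf_eq, SetLike.mem_coe]
  constructor
  · intro hf
    have hfA : f ∈ affSub p a ha := by
      refine Subgroup.closure_le (affSub p a ha) |>.mpr ?_ hf
      rintro g ⟨x, rfl⟩
      exact ⟨1, (1 - a) * x, fun z => by simp [alexS_apply']⟩
    obtain ⟨k, c, hfk⟩ := hfA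
    by_cases hak : a ^ k = 1
    · refine Or.inr ⟨c, ?_⟩
      ext z
      simp [hfk z, hak, add_comm]
    · refine Or.inl ⟨(1 - a ^ k)⁻¹ * c, k, ?_⟩
      ext z
      rw [hfk z, alexS_zpow]
      have h1k : (1 : ZMod p) - a ^ k ≠ 0 := sub_ne_zero.mpr (Ne.symm hak)
      field_simp
  · rintro (⟨x, k, rfl⟩ | ⟨m, rfl⟩)
    · exact Subgroup.zpow_mem _ (Subgroup.subset_closure (Set.mem_range_self x)) k
    · have hx : Equiv.addLeft m =
          alexS p a ha ((1 - a)⁻¹ * m) * (alexS p a ha 0)⁻¹ := by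
        ext z
        rw [Equiv.Perm.mul_apply, alexS_inv_apply, alexS_apply']
        field_simp
        ring
        exact add_comm _ _
      rw [hx]
      exact Subgroup.mul_mem _ (Subgroup.subset_closure (Set.mem_range_self _))
        (Subgroup.inv_mem _ (Subgroup.subset_closure (Set.mem_range_self _)))
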